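/- Let K be a nonempty compact topological space and let δ ∈ (0,2). Let f : ℝ → ℝ be a continuous function that is analytic at every point of the open interval (−1+δ/2, 1−δ/2). Then the superposition operator Φ on the Banach space C(K,ℝ), defined by Φ(u)(x) = f(u(x)), is analytic (in the sense of analytic maps between Banach spaces, i.e. AnalyticAt) at every point u of the open set 𝒰 = {u ∈ C(K,ℝ) : −1+δ < u(x) < 1−δ for all x ∈ K}. -/

import Mathlib

open scoped NNReal ENNReal Nat

lemma key_uniform {f : ℝ → ℝ} {J : Set ℝ} (hJ : IsCompact J)
    (hfa : ∀ s ∈ J, AnalyticAt ℝ f s) :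
    ∃ (ε C : ℝ≥0), 0 < ε ∧ ∀ t ∈ J, ∃ q : FormalMultilinearSeries ℝ ℝ ℝ,
      HasFPowerSeriesOnBall f q t ε ∧ ∀ n, ‖q n‖ * (ε : ℝ) ^ n ≤ C := by
  rcases Set.eq_empty_or_nonempty J with hJe | hJne
  · exact ⟨1, 0, one_pos, by simp [hJe]⟩
  have H : ∀ s ∈ J, ∃ (p : FormalMultilinearSeries ℝ ℝ ℝ) (ρ : ℝ≥0), 0 < ρ ∧
      HasFPowerSeriesOnBall f p s ρ := by
    intro s hs
    obtain ⟨p, r, hr⟩ := hfa s hs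
    obtain ⟨ρ, hρ0, hρr⟩ := ENNReal.lt_iff_exists_nnreal_btwn.1 hr.r_pos
    exact ⟨p, ρ, by exact_mod_cast hρ0, hr.mono hρ0 hρr.le⟩
  choose! p ρ hρ hball using H
  obtain ⟨S, hSJ, hSfin, hScov⟩ := hJ.elim_finite_subcover_image
    (c := fun s => Metric.ball s ((ρ s : ℝ) / 3)) (fun s _ => Metric.isOpen_ball)
    (fun t ht => Set.mem_biUnion ht (by
      simp only [Metric.mem_ball, dist_self]
      have h := hρ t ht
      have : (0:ℝ) < ρ t := h
      positivity))
  set F : Finset ℝ := hSfin.toFinset with hF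
  have hmemF : ∀ {s}, s ∈ F ↔ s ∈ S := fun {s} => hSfin.mem_toFinset
  have hFne : F.Nonempty := by
    obtain ⟨t, ht⟩ := hJne
    obtain ⟨s, hs, -⟩ := Set.mem_iUnion₂.1 (hScov ht)
    exact ⟨s, hmemF.2 hs⟩
  set ε : ℝ≥0 := F.inf' hFne (fun s => ρ s / 3) with hε
  have hεpos : 0 < ε := by
    rw [hε, Finset.lt_inf'_iff]
    intro s hs
    have := hρ s (hSJ (hmemF.1 hs))
    positivity
  have hεle : ∀ s ∈ F, ε ≤ ρ s / 3 := fun s hs => Finset.inf'_le _ hs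
  -- the uniform tsum bounds
  set D : ℝ → ℝ≥0∞ := fun s =>
    ∑' σ : (Σ k l : ℕ, { t : Finset (Fin (k + l)) // t.card = l }),
      ((‖p s (σ.1 + σ.2.1)‖₊ * (ρ s / 3) ^ σ.2.1 * (ρ s / 3) ^ σ.1 : ℝ≥0) : ℝ≥0∞) with hD
  have hDsummable : ∀ s ∈ J, Summable fun σ : (Σ k l : ℕ,
      { t : Finset (Fin (k + l)) // t.card = l }) =>
      (‖p s (σ.1 + σ.2.1)‖₊ * (ρ s / 3) ^ σ.2.1 * (ρ s / 3) ^ σ.1 : ℝ≥0) := by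
    intro s hs
    apply (p s).changeOriginSeries_summable_aux₁ (r := ρ s / 3) (r' := ρ s / 3)
    have h1 : ((ρ s / 3 : ℝ≥0) : ℝ≥0∞) + ((ρ s / 3 : ℝ≥0) : ℝ≥0∞) < (ρ s : ℝ≥0∞) := by
      rw [← ENNReal.coe_add, ENNReal.coe_lt_coe]
      have := hρ s hs
      rw [← NNReal.coe_lt_coe]
      push_cast
      have : (0:ℝ) < ρ s := this
      linarith
    exact h1.trans_le (hball s hs).r_le
  have hDfin : ∀ s ∈ J, D s ≠ ⊤ := fun s hs =>
    ENNReal.tsum_coe_ne_top_iff_summable.2 (hDsummable s hs)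
  set C : ℝ≥0 := F.sup (fun s => (D s).toNNReal) with hC
  have hDC : ∀ s ∈ F, D s ≤ (C : ℝ≥0∞) := by
    intro s hs
    rw [← ENNReal.coe_toNNReal (hDfin s (hSJ (hmemF.1 hs))), ENNReal.coe_le_coe]
    exact Finset.le_sup (f := fun s => (D s).toNNReal) hs
  refine ⟨ε, C, hεpos, fun t ht => ?_⟩
  obtain ⟨s, hsS, hts⟩ := Set.mem_iUnion₂.1 (hScov ht)
  have hsF : s ∈ F := hmemF.2 hsS
  have hsJ : s ∈ J := hSJ hsS
  have hynorm : ‖t - s‖₊ < ρ s / 3 := by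
    rw [← NNReal.coe_lt_coe]
    push_cast
    simpa [Real.dist_eq] using hts
  have hyρ : (‖t - s‖₊ : ℝ≥0∞) < (ρ s : ℝ≥0∞) := by
    rw [ENNReal.coe_lt_coe]
    refine hynorm.trans_le ?_
    rw [← NNReal.coe_le_coe]
    have : (0:ℝ) ≤ ρ s := (ρ s).2
    push_cast
    linarith
  have hyrad : (‖t - s‖₊ : ℝ≥0∞) < (p s).radius := hyρ.trans_le (hball s hsJ).r_le
  refine ⟨(p s).changeOrigin (t - s), ?_, ?_⟩
  · have h1 := (hball s hsJ).changeOrigin hyρ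
    rw [add_sub_cancel] at h1
    refine h1.mono (by exact_mod_cast hεpos) ?_
    refine ENNReal.le_sub_of_add_le_right (by simp) ?_
    rw [← ENNReal.coe_add, ENNReal.coe_le_coe]
    calc ε + ‖t - s‖₊ ≤ ρ s / 3 + ρ s / 3 := add_le_add (hεle s hsF) hynorm.le
    _ ≤ ρ s := by
        rw [← NNReal.coe_le_coe]
        have : (0:ℝ) ≤ ρ s := (ρ s).2
        push_cast
        linarith
  · intro n
    have key : ((‖(p s).changeOrigin (t - s) n‖₊ * ε ^ n : ℝ≥0) : ℝ≥0∞) ≤ (C : ℝ≥0∞) := by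
      have h1 : ((‖(p s).changeOrigin (t - s) n‖₊ : ℝ≥0) : ℝ≥0∞)
          ≤ ∑' σ : (Σ l : ℕ, { t' : Finset (Fin (n + l)) // t'.card = l }),
            ((‖p s (n + σ.1)‖₊ * ‖t - s‖₊ ^ σ.1 : ℝ≥0) : ℝ≥0∞) := by
        rw [← ENNReal.coe_tsum ((p s).changeOriginSeries_summable_aux₂ hyrad n)]
        exact_mod_cast (p s).nnnorm_changeOrigin_le n hyrad
      calc ((‖(p s).changeOrigin (t - s) n‖₊ * ε ^ n : ℝ≥0) : ℝ≥0∞)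
          = (‖(p s).changeOrigin (t - s) n‖₊ : ℝ≥0∞) * (ε : ℝ≥0∞) ^ n := by push_cast; ring
        _ ≤ (∑' σ : (Σ l : ℕ, { t' : Finset (Fin (n + l)) // t'.card = l }),
            ((‖p s (n + σ.1)‖₊ * ‖t - s‖₊ ^ σ.1 : ℝ≥0) : ℝ≥0∞)) * (ε : ℝ≥0∞) ^ n :=
            mul_le_mul_left h1 _
        _ = ∑' σ : (Σ l : ℕ, { t' : Finset (Fin (n + l)) // t'.card = l }),
            ((‖p s (n + σ.1)‖₊ * ‖t - s‖₊ ^ σ.1 : ℝ≥0) : ℝ≥0∞) * (ε : ℝ≥0∞) ^ n :=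
            ENNReal.tsum_mul_right.symm
        _ ≤ ∑' σ : (Σ l : ℕ, { t' : Finset (Fin (n + l)) // t'.card = l }),
            ((‖p s (n + σ.1)‖₊ * (ρ s / 3) ^ σ.1 * (ρ s / 3) ^ n : ℝ≥0) : ℝ≥0∞) := by
            refine ENNReal.tsum_le_tsum fun σ => ?_
            push_cast
            refine mul_le_mul' (mul_le_mul' le_rfl ?_) ?_
            · exact pow_le_pow_left' (by rw [← ENNReal.coe_ofNat, ← ENNReal.coe_div (by norm_num)]; exact_mod_cast hynorm.le) _
            · exact pow_le_pow_left' (by rw [← ENNReal.coe_ofNat, ← ENNReal.coe_div (by norm_num)]; exact_mod_cast hεle s hsF) _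
        _ ≤ D s := by
            rw [hD]
            exact ENNReal.tsum_comp_le_tsum_of_injective
              (f := fun σ : (Σ l : ℕ, { t' : Finset (Fin (n + l)) // t'.card = l }) =>
                (⟨n, σ.1, σ.2⟩ : Σ k l : ℕ, { t' : Finset (Fin (k + l)) // t'.card = l }))
              (fun a b hab => by
                simpa using sigma_mk_injective hab) _
        _ ≤ (C : ℝ≥0∞) := hDC s hsF
    have key2 : ‖(p s).changeOrigin (t - s) n‖₊ * ε ^ n ≤ C := by exact_mod_cast key
    rw [← NNReal.coe_le_coe] at key2
    push_cast at key2
    convert key2 using 2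



/-- Superposition operators by functions analytic on an interval are analytic
on the set of continuous functions with values in a compact subinterval. -/
theorem stmt0 {K : Type*} [TopologicalSpace K] [CompactSpace K] [Nonempty K]
    (δ : ℝ) (hδ : δ ∈ Set.Ioo (0 : ℝ) 2)
    (f : ℝ → ℝ) (hf : Continuous f)
    (hfa : ∀ s ∈ Set.Ioo (-1 + δ / 2) (1 - δ / 2), AnalyticAt ℝ f s)
    (u : C(K, ℝ)) (hu : ∀ x : K, -1 + δ < u x ∧ u x < 1 - δ) :
    AnalyticAt ℝ (fun v : C(K, ℝ) => ContinuousMap.comp ⟨f, hf⟩ v) u := by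
  obtain ⟨hδ0, hδ2⟩ := hδ
  have hδ1 : δ < 1 := by
    have h := hu (Classical.arbitrary K)
    linarith [h.1, h.2]
  set J : Set ℝ := Set.Icc (-1 + δ) (1 - δ) with hJdef
  have hJsub : J ⊆ Set.Ioo (-1 + δ / 2) (1 - δ / 2) := by
    intro t ht
    rw [hJdef, Set.mem_Icc] at ht
    exact ⟨by linarith [ht.1], by linarith [ht.2]⟩
  have huJ : ∀ x : K, u x ∈ J := fun x => ⟨(hu x).1.le, (hu x).2.le⟩
  obtain ⟨ε, C, hε, hkey⟩ := key_uniform isCompact_Icc (fun s hs => hfa s (hJsub hs))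
  -- canonical Taylor coefficients
  set c : ℕ → ℝ → ℝ := fun n s => (n ! : ℝ)⁻¹ * iteratedDeriv n f s with hcdef
  have hmain : ∀ t ∈ J, (∀ n, |c n t| * (ε : ℝ) ^ n ≤ C) ∧
      ∀ w : ℝ, |w| < (ε : ℝ) → HasSum (fun n => c n t * w ^ n) (f (t + w)) := by
    intro t ht
    obtain ⟨q, hq, hqb⟩ := hkey t ht
    have hco : ∀ n, c n t = q.coeff n := by
      intro n
      have h1 := hq.factorial_smul (y := (1 : ℝ)) n
      rw [← iteratedDeriv_eq_iteratedFDeriv] at h1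
      have h2 : (n ! : ℝ) * q.coeff n = iteratedDeriv n f t := by
        rw [← h1, FormalMultilinearSeries.coeff, nsmul_eq_mul]
        rfl
      rw [hcdef]
      dsimp only
      rw [← h2, ← mul_assoc, inv_mul_cancel₀ (by exact_mod_cast n.factorial_ne_zero), one_mul]
    constructor
    · intro n
      rw [hco n]
      have : |q.coeff n| = ‖q n‖ := by
        rw [FormalMultilinearSeries.norm_apply_eq_norm_coef, Real.norm_eq_abs]
      rw [this]
      exact hqb n
    · intro w hw
      have hw' : w ∈ Metric.eball (0 : ℝ) ε := by
        rw [Metric.mem_eball, edist_zero_right]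
        have : ‖w‖₊ < ε := by rw [← NNReal.coe_lt_coe]; simpa using hw
        exact_mod_cast this
      have h3 := hq.hasSum hw'
      have heq : (fun n => c n t * w ^ n) = fun n => q n fun _ => w := by
        funext n
        rw [hco n, FormalMultilinearSeries.apply_eq_pow_smul_coeff, smul_eq_mul, mul_comm]
      rw [heq]
      exact h3
  -- continuity of coefficients along u
  have hccont : ∀ n, Continuous fun x : K => c n (u x) := by
    intro n
    have hAn : AnalyticOnNhd ℝ f (Set.Ioo (-1 + δ / 2) (1 - δ / 2)) := hfa
    have h1 : ContinuousOn (iteratedDeriv n f) (Set.Ioo (-1 + δ / 2) (1 - δ / 2)) := by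
      have := (hAn.iterated_deriv n).continuousOn
      rwa [← iteratedDeriv_eq_iterate] at this
    have h2 : ContinuousOn (c n) (Set.Ioo (-1 + δ / 2) (1 - δ / 2)) :=
      h1.const_smul ((n ! : ℝ)⁻¹)
    exact h2.comp_continuous u.continuous fun x => hJsub (huJ x)
  set g : ℕ → C(K, ℝ) := fun n => ⟨fun x => c n (u x), hccont n⟩ with hgdef
  set P : FormalMultilinearSeries ℝ C(K, ℝ) C(K, ℝ) := fun n =>
    (ContinuousLinearMap.mul ℝ C(K, ℝ) (g n)).compContinuousMultilinearMap
      (ContinuousMultilinearMap.mkPiAlgebraFin ℝ n C(K, ℝ)) with hPdef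
  have hgnorm : ∀ n, ‖g n‖ * (ε : ℝ) ^ n ≤ C := by
    intro n
    have hb : ‖g n‖ ≤ (C : ℝ) / (ε : ℝ) ^ n := by
      rw [ContinuousMap.norm_le _ (by positivity)]
      intro x
      rw [le_div_iff₀ (by positivity)]
      simpa [hgdef] using (hmain (u x) (huJ x)).1 n
    calc ‖g n‖ * (ε : ℝ) ^ n ≤ ((C : ℝ) / (ε : ℝ) ^ n) * (ε : ℝ) ^ n :=
          mul_le_mul_of_nonneg_right hb (by positivity)
      _ = C := by field_simp
  have hPnorm : ∀ n, ‖P n‖ * (ε : ℝ) ^ n ≤ C := by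
    intro n
    refine le_trans (mul_le_mul_of_nonneg_right ?_ (by positivity)) (hgnorm n)
    calc ‖P n‖ ≤ ‖ContinuousLinearMap.mul ℝ C(K, ℝ) (g n)‖ *
          ‖ContinuousMultilinearMap.mkPiAlgebraFin ℝ n C(K, ℝ)‖ :=
          ContinuousLinearMap.norm_compContinuousMultilinearMap_le _ _
      _ ≤ ‖g n‖ * 1 := by
          gcongr
          · exact ContinuousLinearMap.opNorm_mul_apply_le ℝ C(K, ℝ) (g n)
          · exact le_of_eq (ContinuousMultilinearMap.norm_mkPiAlgebraFin)
      _ = ‖g n‖ := mul_one _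
  have hrad : (ε : ℝ≥0∞) ≤ P.radius := P.le_radius_of_bound C hPnorm
  refine ⟨P, (ε : ℝ≥0∞), hrad, by exact_mod_cast hε, ?_⟩
  intro y hy
  have hynorm : ‖y‖ < (ε : ℝ) := by
    rw [EMetric.mem_ball, edist_zero_right] at hy
    exact_mod_cast hy
  -- pointwise application of P n
  have hPapp : ∀ n, (P n fun _ => y) = g n * y ^ n := by
    intro n
    rw [hPdef]
    ext x
    simp [ContinuousMultilinearMap.mkPiAlgebraFin_apply, List.ofFn_const, List.prod_replicate]
  have hsummable : Summable fun n => P n fun _ => y := by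
    refine Summable.of_norm_bounded (g := fun n => (C : ℝ) * (‖y‖ / (ε : ℝ)) ^ n)
      ((summable_geometric_of_lt_one (by positivity)
        (by rw [div_lt_one (by positivity)]; exact hynorm)).mul_left _) fun n => ?_
    calc ‖P n fun _ => y‖ ≤ ‖P n‖ * ∏ _i : Fin n, ‖y‖ :=
          (P n).le_opNorm _
      _ = ‖P n‖ * ‖y‖ ^ n := by rw [Finset.prod_const, Finset.card_fin]
      _ = (‖P n‖ * (ε : ℝ) ^ n) * (‖y‖ / (ε : ℝ)) ^ n := by
          rw [div_pow]
          field_simp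
      _ ≤ (C : ℝ) * (‖y‖ / (ε : ℝ)) ^ n := by
          gcongr
          exact hPnorm n
  have hS := hsummable.hasSum
  have htarget : ContinuousMap.comp ⟨f, hf⟩ (u + y) = ∑' n, P n fun _ => y := by
    ext x
    have h1 : HasSum (fun n => c n (u x) * (y x) ^ n) (f (u x + y x)) :=
      (hmain (u x) (huJ x)).2 (y x) (lt_of_le_of_lt (by
        simpa using (ContinuousMap.norm_coe_le_norm y x)) hynorm)
    have h2 : HasSum (fun n => c n (u x) * (y x) ^ n) ((∑' n, P n fun _ => y) x) := by
      have h2' := (ContinuousMap.evalCLM (R := ℝ) (M := ℝ) x).hasSum hS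
      have heq2 : (fun n => ContinuousMap.evalCLM (R := ℝ) (M := ℝ) x (P n fun _ => y))
          = fun n => c n (u x) * (y x) ^ n := by
        funext n
        show (P n fun _ => y) x = _
        rw [hPapp n]
        simp [hgdef]
      rw [heq2] at h2'
      exact h2'
    simpa using h1.unique h2
  exact htarget ▸ hS
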